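/- Let φ: ℤ[1/3] → ℤ[1/3] be the endomorphism g ↦ 2g. Then for every n ≥ 1, the cokernel ℤ[1/3]/(2ⁿ - 1)ℤ[1/3] is finite of cardinality (2ⁿ - 1)/3^{v₃(2ⁿ-1)}, i.e., the Reidemeister number R(φⁿ) = |2ⁿ - 1| · |2ⁿ - 1|₃. -/

import Mathlib

/-- For the endomorphism `g ↦ 2g` of `ℤ[1/3]`, the Reidemeister number of its `n`-th
iterate, i.e. the cardinality of the cokernel `ℤ[1/3]/(2ⁿ-1)ℤ[1/3]`, is finite and
equals `(2ⁿ - 1)/3^{v₃(2ⁿ-1)} = |2ⁿ-1| ⬝ |2ⁿ-1|₃`. -/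
lemma aux_card_quot (d : ℕ) (hd0 : 0 < d) (hd : ¬ 3 ∣ d) :
    Nonempty (ZMod d ≃+* (Localization.Away (3 : ℤ) ⧸
      Ideal.span {((d : ℕ) : Localization.Away (3 : ℤ))})) := by
  set R := Localization.Away (3 : ℤ)
  set I : Ideal R := Ideal.span {((d : ℕ) : R)}
  have hunit : IsUnit ((3 : ℤ) : ZMod d) := by
    have : IsUnit ((3 : ℕ) : ZMod d) :=
      (ZMod.isUnit_iff_coprime 3 d).2 ((Nat.Prime.coprime_iff_not_dvd Nat.prime_three).2 hd)
    simpa using this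
  have hy : ∀ y : Submonoid.powers (3 : ℤ), IsUnit ((Int.castRingHom (ZMod d)) y) := by
    rintro ⟨y, j, rfl⟩
    simpa using hunit.pow j
  let g : R →+* ZMod d := IsLocalization.lift (M := Submonoid.powers (3 : ℤ)) (S := R) hy
  have hg : ∀ a : ℤ, g (algebraMap ℤ R a) = (a : ZMod d) :=
    fun a => IsLocalization.lift_eq hy a
  have hgd : g ((d : ℕ) : R) = 0 := by
    have h' : (((d : ℕ) : ℤ) : R) = ((d : ℕ) : R) := by push_cast; ring
    rw [← h', ← map_intCast (algebraMap ℤ R), hg]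
    simp
  let gbar : R ⧸ I →+* ZMod d := Ideal.Quotient.lift I g (by
    intro x hx
    obtain ⟨r, rfl⟩ := Ideal.mem_span_singleton.1 hx
    rw [map_mul, hgd, zero_mul])
  let f : ℤ →+* R ⧸ I := (Ideal.Quotient.mk I).comp (algebraMap ℤ R)
  have hfd : ∀ x ∈ Ideal.span {((d : ℕ) : ℤ)}, f x = 0 := by
    intro x hx
    obtain ⟨r, rfl⟩ := Ideal.mem_span_singleton.1 hx
    have h0 : f ((d:ℕ):ℤ) = 0 := by
      simp only [f, RingHom.comp_apply, map_natCast]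
      exact Ideal.Quotient.eq_zero_iff_mem.2 (Ideal.subset_span rfl)
    rw [map_mul, h0]; exact zero_mul (f r)
  let fbar : ZMod d →+* R ⧸ I :=
    (Ideal.Quotient.lift _ f hfd).comp (Int.quotientSpanNatEquivZMod d).symm.toRingHom
  have h1 : gbar.comp fbar = RingHom.id (ZMod d) := RingHom.ext_zmod _ _
  have key : (fbar.comp gbar).comp (Ideal.Quotient.mk I) = (Ideal.Quotient.mk I) := by
    apply IsLocalization.ringHom_ext (Submonoid.powers (3 : ℤ))
    exact RingHom.ext_int _ _
  have h2 : ∀ x : R ⧸ I, fbar (gbar x) = x := by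
    intro x
    obtain ⟨r, rfl⟩ := Ideal.Quotient.mk_surjective (I := I) x
    exact RingHom.congr_fun key r
  exact ⟨{ toFun := fbar, invFun := gbar,
           left_inv := fun x => RingHom.congr_fun h1 x,
           right_inv := h2,
           map_mul' := map_mul fbar, map_add' := map_add fbar }⟩

theorem reidemeister_number_doubling_Z_one_third (n : ℕ) (hn : 1 ≤ n) :
    Finite (Localization.Away (3 : ℤ) ⧸
        Ideal.span {((2 : Localization.Away (3 : ℤ)) ^ n - 1)}) ∧
    Nat.card (Localization.Away (3 : ℤ) ⧸
        Ideal.span {((2 : Localization.Away (3 : ℤ)) ^ n - 1)}) =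
      (2 ^ n - 1) / 3 ^ (padicValNat 3 (2 ^ n - 1)) := by
  set R := Localization.Away (3 : ℤ)
  set m : ℕ := 2 ^ n - 1 with hm
  have h2n : 1 ≤ 2 ^ n := Nat.one_le_two_pow
  have hm0 : m ≠ 0 := by
    have : 2 ≤ 2 ^ n := by
      calc 2 = 2 ^ 1 := rfl
      _ ≤ 2 ^ n := Nat.pow_le_pow_right (by norm_num) hn
    omega
  set k : ℕ := padicValNat 3 m with hk
  have hkfac : m.factorization 3 = k := Nat.factorization_def m Nat.prime_three
  set d : ℕ := m / 3 ^ k with hdd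
  have hmd : 3 ^ k * d = m := by rw [hdd, ← hkfac]; exact Nat.ordProj_mul_ordCompl_eq_self m 3
  have hd0 : 0 < d := by
    rw [hdd, ← hkfac]; exact Nat.ordCompl_pos 3 hm0
  have hd : ¬ 3 ∣ d := by
    rw [hdd, ← hkfac]; exact Nat.not_dvd_ordCompl Nat.prime_three hm0
  have hcast : ((2 : R) ^ n - 1) = ((m : ℕ) : R) := by
    rw [hm, Nat.cast_sub h2n]; push_cast; ring
  have h3unit : IsUnit ((3 : ℤ) : R) := by
    have := IsLocalization.Away.algebraMap_isUnit (S := R) (3 : ℤ)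
    simpa using this
  have h3unit' : IsUnit ((3 : R) ^ k) := by
    have h33 : ((3:ℤ) : R) = (3 : R) := by push_cast; ring
    exact (h33 ▸ h3unit).pow k
  have hspan : Ideal.span {((2 : R) ^ n - 1)} = Ideal.span {((d : ℕ) : R)} := by
    rw [hcast]
    have hmr : ((m : ℕ) : R) = (3 : R) ^ k * ((d : ℕ) : R) := by
      rw [← hmd, Nat.cast_mul, Nat.cast_pow, Nat.cast_ofNat]
    rw [hmr]
    exact Ideal.span_singleton_mul_left_unit h3unit' _
  obtain ⟨e⟩ := aux_card_quot d hd0 hd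
  rw [hspan]
  have : NeZero d := ⟨hd0.ne'⟩
  constructor
  · exact Finite.of_equiv (ZMod d) e.toEquiv
  · rw [← Nat.card_congr e.toEquiv, Nat.card_zmod]
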